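/- arXiv:2605.00862 — 2 statements merged into one kernel-verified Lean document; each statement's English description precedes it below -/
import Mathlib

section
/- Let (Ω, F, (F_i), Q) be a filtered probability space with discrete times i = 0,…,n, N(t_i) > 0 adapted with integrability, V(t_n) = 0, and suppose for each i there exist F_{t_{i-1}}-measurable initializations with V(t_{i-1})/N(t_{i-1}) = E[H_i(t_i)/N(t_i) | F_{t_{i-1}}], where H_i(t_i) = κ_i + V(t_i) - ε_i and ε_n = 0. Then N(0)·E[∑_{i=1}^n κ_i/N(t_i)] = V(0) + N(0)·E[∑_{i=1}^{n-1} ε_i/N(t_i)]. -/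
open MeasureTheory

theorem stmt12 {Ω : Type*} [m0 : MeasurableSpace Ω] (Q : Measure Ω) [IsProbabilityMeasure Q]
    (n : ℕ) (hn : 1 ≤ n) (F : ℕ → MeasurableSpace Ω) (hF : ∀ i, F i ≤ m0)
    (V N κ ε : ℕ → Ω → ℝ) (v0 n0 : ℝ) (hn0 : 0 < n0)
    (hNpos : ∀ i, ∀ᵐ ω ∂Q, 0 < N i ω)
    (hV0 : ∀ ω, V 0 ω = v0) (hN0 : ∀ ω, N 0 ω = n0)
    (hVn : ∀ ω, V n ω = 0) (hεn : ∀ ω, ε n ω = 0)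
    (hint_κ : ∀ i, Integrable (fun ω => κ i ω / N i ω) Q)
    (hint_V : ∀ i, Integrable (fun ω => V i ω / N i ω) Q)
    (hint_ε : ∀ i, Integrable (fun ω => ε i ω / N i ω) Q)
    (hstep : ∀ i ∈ Finset.Icc 1 n,
      (fun ω => V (i - 1) ω / N (i - 1) ω)
        =ᵐ[Q] Q[fun ω => (κ i ω + V i ω - ε i ω) / N i ω | F (i - 1)]) :
    n0 * ∫ ω, ∑ i ∈ Finset.Icc 1 n, κ i ω / N i ω ∂Q
      = v0 + n0 * ∫ ω, ∑ i ∈ Finset.Icc 1 (n - 1), ε i ω / N i ω ∂Q := by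
  set a : ℕ → ℝ := fun i => ∫ ω, κ i ω / N i ω ∂Q with ha
  set b : ℕ → ℝ := fun i => ∫ ω, V i ω / N i ω ∂Q with hb
  set c : ℕ → ℝ := fun i => ∫ ω, ε i ω / N i ω ∂Q with hc
  have key : ∀ i ∈ Finset.Icc 1 n, b (i - 1) = a i + b i - c i := by
    intro i hi
    have h1 : b (i - 1) = ∫ ω, (κ i ω + V i ω - ε i ω) / N i ω ∂Q := by
      rw [hb]
      calc (∫ ω, V (i-1) ω / N (i-1) ω ∂Q)
          = ∫ ω, (Q[fun ω => (κ i ω + V i ω - ε i ω) / N i ω | F (i - 1)]) ω ∂Q :=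
            integral_congr_ae (hstep i hi)
        _ = _ := integral_condExp (hF (i-1))
    have h2 : (fun ω => (κ i ω + V i ω - ε i ω) / N i ω)
        = fun ω => κ i ω / N i ω + V i ω / N i ω - ε i ω / N i ω := by
      funext ω; ring
    rw [h1, h2]
    calc (∫ ω, κ i ω / N i ω + V i ω / N i ω - ε i ω / N i ω ∂Q)
        = (∫ ω, κ i ω / N i ω + V i ω / N i ω ∂Q) - ∫ ω, ε i ω / N i ω ∂Q :=
          integral_sub ((hint_κ i).add (hint_V i)) (hint_ε i)
      _ = (∫ ω, κ i ω / N i ω ∂Q) + (∫ ω, V i ω / N i ω ∂Q) - ∫ ω, ε i ω / N i ω ∂Q := by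
          rw [integral_add (hint_κ i) (hint_V i)]
      _ = a i + b i - c i := rfl
  have key' : ∀ i ∈ Finset.range n, b i - b (i + 1) = a (i + 1) - c (i + 1) := by
    intro i hi
    have h := key (i + 1) (by
      simp only [Finset.mem_Icc]
      exact ⟨Nat.le_add_left 1 i, Nat.succ_le_of_lt (Finset.mem_range.mp hi)⟩)
    simp only [Nat.add_sub_cancel] at h
    linarith
  have tele : b 0 - b n = ∑ i ∈ Finset.range n, (a (i + 1) - c (i + 1)) := by
    rw [← Finset.sum_range_sub' b n]
    exact Finset.sum_congr rfl key'
  have hb0 : b 0 = v0 / n0 := by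
    have : (fun ω => V 0 ω / N 0 ω) = fun _ : Ω => v0 / n0 := by
      funext ω; rw [hV0, hN0]
    rw [hb]; simp only [this, integral_const, measure_univ, probReal_univ, smul_eq_mul,
      one_mul]
  have hbn : b n = 0 := by
    rw [hb]; simp only [hVn, zero_div, integral_zero]
  have hcn : c n = 0 := by
    rw [hc]; simp only [hεn, zero_div, integral_zero]
  have hsum_a : ∑ i ∈ Finset.range n, a (i + 1) = ∑ i ∈ Finset.Icc 1 n, a i := by
    rw [← Finset.Ico_add_one_right_eq_Icc, Finset.sum_Ico_eq_sum_range]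
    simp [add_comm]
  have hsum_c : ∑ i ∈ Finset.range n, c (i + 1) = ∑ i ∈ Finset.Icc 1 (n - 1), c i := by
    have h1 : ∑ i ∈ Finset.range n, c (i + 1) = ∑ i ∈ Finset.Icc 1 n, c i := by
      rw [← Finset.Ico_add_one_right_eq_Icc, Finset.sum_Ico_eq_sum_range]
      simp [add_comm]
    have h2 : Finset.Icc 1 n = Finset.Icc 1 (n - 1) ∪ {n} := by
      ext x
      simp only [Finset.mem_Icc, Finset.mem_union, Finset.mem_singleton]
      omega
    rw [h1, h2, Finset.sum_union]
    · simp [hcn]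
    · simp only [Finset.disjoint_singleton_right, Finset.mem_Icc]
      omega
  have main : ∑ i ∈ Finset.Icc 1 n, a i = v0 / n0 + ∑ i ∈ Finset.Icc 1 (n - 1), c i := by
    rw [Finset.sum_sub_distrib, hsum_a, hsum_c, hb0, hbn] at tele
    linarith
  have hInt1 : (∫ ω, ∑ i ∈ Finset.Icc 1 n, κ i ω / N i ω ∂Q) = ∑ i ∈ Finset.Icc 1 n, a i :=
    integral_finset_sum _ (fun i _ => hint_κ i)
  have hInt2 : (∫ ω, ∑ i ∈ Finset.Icc 1 (n - 1), ε i ω / N i ω ∂Q)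
      = ∑ i ∈ Finset.Icc 1 (n - 1), c i :=
    integral_finset_sum _ (fun i _ => hint_ε i)
  rw [hInt1, hInt2, main]
  field_simp
end

section
/- For x ≥ 0, |e^{-x} - 1 + x| ≤ x²/2. Consequently, with p_i = exp(-r_i·Δt), r_i ≥ 0 bounded by R, and integrable δ_i⁺/N_i, we have |LVA(Δt) + N₀·E[∑_{i=1}^n δ_i⁺·r_i·Δt/N_i]| ≤ (R²Δt²/2)·N₀·E[∑_{i=1}^n δ_i⁺/N_i], i.e., LVA(Δt) = -N₀·E[∑ δ_i⁺·r_i·Δt/N_i] + O(Δt²). -/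
open MeasureTheory

lemma exp_neg_bound (x : ℝ) (hx : 0 ≤ x) :
    |Real.exp (-x) - 1 + x| ≤ x ^ 2 / 2 := by
  have hlow : 0 ≤ Real.exp (-x) - 1 + x := by
    have := Real.add_one_le_exp (-x)
    linarith
  have hder : ∀ y : ℝ, HasDerivAt (fun y : ℝ => y ^ 2 / 2 - y + 1 - Real.exp (-y))
      (y - 1 + Real.exp (-y)) y := by
    intro y
    have h1 : HasDerivAt (fun y : ℝ => y ^ 2 / 2 - y + 1) (y - 1) y := by
      have := (((hasDerivAt_pow 2 y).div_const 2).sub (hasDerivAt_id y)).add_const 1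
      simpa using this
    have h2 : HasDerivAt (fun y : ℝ => Real.exp (-y)) (-Real.exp (-y)) y := by
      simpa [Function.comp_def] using (Real.hasDerivAt_exp (-y)).comp y (hasDerivAt_neg y)
    simpa [Pi.sub_def] using h1.sub h2
  have hmono : MonotoneOn (fun y : ℝ => y ^ 2 / 2 - y + 1 - Real.exp (-y)) (Set.Ici 0) := by
    apply monotoneOn_of_deriv_nonneg (convex_Ici 0)
    · exact (Continuous.continuousOn (by continuity))
    · intro y hy
      exact (hder y).differentiableAt.differentiableWithinAt
    · intro y hy
      rw [(hder y).deriv]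
      have := Real.add_one_le_exp (-y)
      linarith
  have h0 : (fun y : ℝ => y ^ 2 / 2 - y + 1 - Real.exp (-y)) 0 ≤
      (fun y : ℝ => y ^ 2 / 2 - y + 1 - Real.exp (-y)) x :=
    hmono (Set.self_mem_Ici) hx hx
  simp only [Real.exp_zero] at h0
  rw [abs_of_nonneg hlow]
  norm_num at h0
  linarith

theorem stmt17 {Ω : Type*} [MeasurableSpace Ω] (Q : Measure Ω) [IsProbabilityMeasure Q]
    (n : ℕ) (δ N r : Fin n → Ω → ℝ) (N₀ R Δt : ℝ)
    (hN₀ : 0 < N₀) (hΔt : 0 ≤ Δt) (hR : 0 ≤ R)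
    (hNpos : ∀ i ω, 0 < N i ω)
    (hr : ∀ i ω, 0 ≤ r i ω ∧ r i ω ≤ R)
    (hint1 : Integrable (fun ω => ∑ i, max (δ i ω) 0 / N i ω) Q)
    (hint2 : Integrable (fun ω => ∑ i, max (δ i ω) 0 * r i ω * Δt / N i ω) Q)
    (hint3 : Integrable
      (fun ω => ∑ i, max (δ i ω) 0 * (Real.exp (-(r i ω * Δt)) - 1) / N i ω) Q) :
    (∀ x : ℝ, 0 ≤ x → |Real.exp (-x) - 1 + x| ≤ x ^ 2 / 2) ∧
    |N₀ * (∫ ω, ∑ i, max (δ i ω) 0 * (Real.exp (-(r i ω * Δt)) - 1) / N i ω ∂Q)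
        + N₀ * (∫ ω, ∑ i, max (δ i ω) 0 * r i ω * Δt / N i ω ∂Q)|
      ≤ (R ^ 2 * Δt ^ 2 / 2) * (N₀ * ∫ ω, ∑ i, max (δ i ω) 0 / N i ω ∂Q) := by
  refine ⟨fun x hx => exp_neg_bound x hx, ?_⟩
  set c := R ^ 2 * Δt ^ 2 / 2 with hc
  have hc0 : 0 ≤ c := by positivity
  -- pointwise bound
  have hpt : ∀ ω,
      |(∑ i, max (δ i ω) 0 * (Real.exp (-(r i ω * Δt)) - 1) / N i ω)
        + ∑ i, max (δ i ω) 0 * r i ω * Δt / N i ω|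
      ≤ c * ∑ i, max (δ i ω) 0 / N i ω := by
    intro ω
    rw [← Finset.sum_add_distrib, Finset.mul_sum]
    refine (Finset.abs_sum_le_sum_abs _ _).trans (Finset.sum_le_sum fun i _ => ?_)
    have hri := hr i ω
    have hNi := hNpos i ω
    have hdpos : (0:ℝ) ≤ max (δ i ω) 0 := le_max_right _ _
    have hx : 0 ≤ r i ω * Δt := mul_nonneg hri.1 hΔt
    have hkey := exp_neg_bound (r i ω * Δt) hx
    have heq : max (δ i ω) 0 * (Real.exp (-(r i ω * Δt)) - 1) / N i ω
        + max (δ i ω) 0 * r i ω * Δt / N i ω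
        = (max (δ i ω) 0 / N i ω) * (Real.exp (-(r i ω * Δt)) - 1 + r i ω * Δt) := by
      field_simp
    rw [heq, abs_mul, abs_of_nonneg (div_nonneg hdpos hNi.le)]
    have h2 : (r i ω * Δt) ^ 2 / 2 ≤ c := by
      rw [hc]
      have hrr : r i ω ^ 2 ≤ R ^ 2 := by nlinarith [hri.1, hri.2]
      have : (r i ω * Δt) ^ 2 ≤ R ^ 2 * Δt ^ 2 := by
        rw [mul_pow]
        exact mul_le_mul_of_nonneg_right hrr (sq_nonneg Δt)
      linarith
    calc max (δ i ω) 0 / N i ω * |Real.exp (-(r i ω * Δt)) - 1 + r i ω * Δt|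
        ≤ max (δ i ω) 0 / N i ω * ((r i ω * Δt) ^ 2 / 2) := by
          gcongr
      _ ≤ max (δ i ω) 0 / N i ω * c := by gcongr
      _ = c * (max (δ i ω) 0 / N i ω) := mul_comm _ _
  have hsum : N₀ * (∫ ω, ∑ i, max (δ i ω) 0 * (Real.exp (-(r i ω * Δt)) - 1) / N i ω ∂Q)
      + N₀ * (∫ ω, ∑ i, max (δ i ω) 0 * r i ω * Δt / N i ω ∂Q)
      = N₀ * ∫ ω, ((∑ i, max (δ i ω) 0 * (Real.exp (-(r i ω * Δt)) - 1) / N i ω)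
        + ∑ i, max (δ i ω) 0 * r i ω * Δt / N i ω) ∂Q := by
    rw [integral_add hint3 hint2, mul_add]
  rw [hsum, abs_mul, abs_of_pos hN₀]
  have hbound : |∫ ω, ((∑ i, max (δ i ω) 0 * (Real.exp (-(r i ω * Δt)) - 1) / N i ω)
        + ∑ i, max (δ i ω) 0 * r i ω * Δt / N i ω) ∂Q|
      ≤ c * ∫ ω, ∑ i, max (δ i ω) 0 / N i ω ∂Q := by
    calc _ ≤ ∫ ω, |(∑ i, max (δ i ω) 0 * (Real.exp (-(r i ω * Δt)) - 1) / N i ω)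
          + ∑ i, max (δ i ω) 0 * r i ω * Δt / N i ω| ∂Q := by
            simpa [Real.norm_eq_abs] using
              norm_integral_le_integral_norm (μ := Q)
                (f := fun ω => (∑ i, max (δ i ω) 0 * (Real.exp (-(r i ω * Δt)) - 1) / N i ω)
                  + ∑ i, max (δ i ω) 0 * r i ω * Δt / N i ω)
      _ ≤ ∫ ω, c * (∑ i, max (δ i ω) 0 / N i ω) ∂Q :=
            integral_mono (hint3.add hint2).abs (hint1.const_mul c) hpt
      _ = c * ∫ ω, ∑ i, max (δ i ω) 0 / N i ω ∂Q := integral_const_mul c _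
  calc N₀ * |_| ≤ N₀ * (c * ∫ ω, ∑ i, max (δ i ω) 0 / N i ω ∂Q) := by gcongr
    _ = c * (N₀ * ∫ ω, ∑ i, max (δ i ω) 0 / N i ω ∂Q) := by ring
end
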